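/- Let N ≥ 2 and let m_0, …, m_{N−1} : 𝕋 → ℂ be continuous functions. Define A_{j,k}(z) = (1/N) Σ_{w∈𝕋, w^N = z} w^{−k} m_j(w) for j,k ∈ {0,…,N−1} and z ∈ 𝕋. Then (a) the reconstruction formula m_j(z) = Σ_{k=0}^{N−1} A_{j,k}(z^N) z^k holds for all z ∈ 𝕋 and all j; and (b) the N×N matrix (1/√N)·( m_j(e^{2πik/N} z) )_{j,k=0}^{N−1} is unitary for all z ∈ 𝕋 if and only if the matrix A(z) = (A_{j,k}(z))_{j,k=0}^{N−1} is unitary for all z ∈ 𝕋. -/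

import Mathlib

open MeasureTheory Complex Real
open scoped ComplexConjugate

noncomputable section

private lemma sum_pow_root' (N : ℕ) (u : ℂ) (hu : u ^ N = 1) :
    ∑ k : Fin N, u ^ (k : ℕ) = if u = 1 then (N : ℂ) else 0 := by
  rw [Fin.sum_univ_eq_sum_range (fun k => u ^ k)]
  split_ifs with h
  · simp [h]
  · rw [geom_sum_eq h, hu]; simp

private lemma roots_sum' (N : ℕ) (hN : 0 < N) (z : ℂ) (hz : z ≠ 0) (f : ℂ → ℂ) :
    ∑ w ∈ (Polynomial.nthRoots N (z ^ N)).toFinset, f w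
      = ∑ l : Fin N, f (Complex.exp (2 * π * Complex.I / N) ^ (l : ℕ) * z) := by
  have hζ : IsPrimitiveRoot (Complex.exp (2 * π * Complex.I / N)) N :=
    Complex.isPrimitiveRoot_exp N hN.ne'
  set ζ := Complex.exp (2 * π * Complex.I / N)
  have hζN : ζ ^ N = 1 := hζ.pow_eq_one
  have : NeZero N := ⟨hN.ne'⟩
  have hst : (Polynomial.nthRoots N (z ^ N)).toFinset
      = Finset.image (fun l : Fin N => ζ ^ (l : ℕ) * z) Finset.univ := by
    ext w
    simp only [Multiset.mem_toFinset, Polynomial.mem_nthRoots hN, Finset.mem_image,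
      Finset.mem_univ, true_and]
    constructor
    · intro hw
      have h1 : (w / z) ^ N = 1 := by rw [div_pow, hw, div_self (pow_ne_zero _ hz)]
      obtain ⟨i, hiN, hi⟩ := hζ.eq_pow_of_pow_eq_one h1
      refine ⟨⟨i, hiN⟩, ?_⟩
      show ζ ^ i * z = w
      rw [hi]
      exact div_mul_cancel₀ w hz
    · rintro ⟨l, rfl⟩
      rw [mul_pow, ← pow_mul, mul_comm (l : ℕ) N, pow_mul, hζN, one_pow, one_mul]
  rw [hst, Finset.sum_image]
  intro a _ b _ hab
  have := mul_right_cancel₀ hz hab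
  exact Fin.ext (hζ.pow_inj a.isLt b.isLt this)

open scoped Classical in
/-- For continuous `m₀,…,m_{N−1}` on the unit circle and
`A_{j,k}(z) = N⁻¹ ∑_{wᴺ=z} w⁻ᵏ mⱼ(w)`: (a) the reconstruction formula
`mⱼ(z) = ∑ₖ A_{j,k}(zᴺ) zᵏ` holds, and (b) the matrix
`N^{-1/2}(mⱼ(e^{2πik/N}z))` is unitary for all `z ∈ 𝕋` iff `A(z)` is unitary
for all `z ∈ 𝕋`. -/
theorem stmt6 (N : ℕ) (hN : 2 ≤ N)
    (m : Fin N → ℂ → ℂ)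
    (hm : ∀ j, ContinuousOn (m j) {z : ℂ | ‖z‖ = 1})
    (A : Fin N → Fin N → ℂ → ℂ)
    (hA : ∀ (j k : Fin N) (z : ℂ), ‖z‖ = 1 →
      A j k z = (N : ℂ)⁻¹ *
        ∑ w ∈ (Polynomial.nthRoots N z).toFinset, w ^ (-(k : ℤ)) * m j w) :
    (∀ (j : Fin N) (z : ℂ), ‖z‖ = 1 →
      m j z = ∑ k : Fin N, A j k (z ^ N) * z ^ (k : ℕ)) ∧
    ((∀ z : ℂ, ‖z‖ = 1 →
        (Matrix.of fun j k : Fin N =>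
            ((Real.sqrt N : ℂ))⁻¹ * m j (Complex.exp (2 * π * Complex.I * k / N) * z))
          ∈ Matrix.unitaryGroup (Fin N) ℂ) ↔
      (∀ z : ℂ, ‖z‖ = 1 →
        (Matrix.of fun j k : Fin N => A j k z) ∈ Matrix.unitaryGroup (Fin N) ℂ)) := by
  have hN0 : 0 < N := by omega
  have : NeZero N := ⟨hN0.ne'⟩
  have hζ : IsPrimitiveRoot (Complex.exp (2 * π * Complex.I / N)) N :=
    Complex.isPrimitiveRoot_exp N hN0.ne'
  set ζ := Complex.exp (2 * π * Complex.I / N) with hζdef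
  have hζN : ζ ^ N = 1 := hζ.pow_eq_one
  have hζ0 : ζ ≠ 0 := Complex.exp_ne_zero _
  have hNc : (N : ℂ) ≠ 0 := Nat.cast_ne_zero.mpr hN0.ne'
  have hζnorm : ‖ζ‖ = 1 := by
    have h1 : ‖ζ‖ ^ N = 1 := by rw [← norm_pow, hζN, norm_one]
    exact (pow_left_inj₀ (norm_nonneg ζ) zero_le_one hN0.ne').mp (by rw [h1, one_pow])
  have hsq : ((Real.sqrt N : ℂ))⁻¹ * ((Real.sqrt N : ℂ))⁻¹ = (N : ℂ)⁻¹ := by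
    rw [← mul_inv, ← Complex.ofReal_mul, Real.mul_self_sqrt (Nat.cast_nonneg N)]
    norm_num
  have hexp : ∀ k : Fin N, Complex.exp (2 * π * Complex.I * (k : ℕ) / N) = ζ ^ (k : ℕ) := by
    intro k
    rw [hζdef, ← Complex.exp_nat_mul]
    congr 1; ring
  have keyA : ∀ (j k : Fin N) (z : ℂ), ‖z‖ = 1 →
      A j k (z ^ N) = (N : ℂ)⁻¹ *
        ∑ l : Fin N, (ζ ^ (l : ℕ) * z) ^ (-(k : ℤ)) * m j (ζ ^ (l : ℕ) * z) := by
    intro j k z hz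
    have hz0 : z ≠ 0 := by intro h; rw [h] at hz; simp at hz
    rw [hA j k (z ^ N) (by rw [norm_pow, hz, one_pow]), roots_sum' N hN0 z hz0]
  have hudiv : ∀ l l' : Fin N, (ζ ^ (l' : ℕ) / ζ ^ (l : ℕ)) ^ N = 1 := by
    intro l l'
    rw [div_pow, ← pow_mul, ← pow_mul, mul_comm (l' : ℕ) N, mul_comm (l : ℕ) N,
      pow_mul, pow_mul, hζN, one_pow, one_pow]
    exact div_self one_ne_zero
  have hueq : ∀ l l' : Fin N, (ζ ^ (l' : ℕ) / ζ ^ (l : ℕ)) = 1 ↔ l = l' := by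
    intro l l'
    rw [div_eq_one_iff_eq (pow_ne_zero _ hζ0)]
    constructor
    · intro h; exact (Fin.ext (hζ.pow_inj l'.isLt l.isLt h)).symm
    · rintro rfl; rfl
  -- Part (a)
  have parta : ∀ (j : Fin N) (z : ℂ), ‖z‖ = 1 →
      m j z = ∑ k : Fin N, A j k (z ^ N) * z ^ (k : ℕ) := by
    intro j z hz
    have hz0 : z ≠ 0 := by intro h; rw [h] at hz; simp at hz
    have step : ∀ k : Fin N, A j k (z ^ N) * z ^ (k : ℕ)
        = ∑ l : Fin N, (N : ℂ)⁻¹ * m j (ζ ^ (l : ℕ) * z) * ((ζ ^ (l : ℕ))⁻¹) ^ (k : ℕ) := by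
      intro k
      rw [keyA j k z hz, Finset.mul_sum, Finset.sum_mul]
      refine Finset.sum_congr rfl fun l _ => ?_
      have h1 : (ζ ^ (l : ℕ) * z) ^ (-(k : ℤ)) * z ^ (k : ℕ)
          = ((ζ ^ (l : ℕ))⁻¹) ^ (k : ℕ) := by
        have h2 : z ^ (-((k : ℕ) : ℤ)) * z ^ ((k : ℕ) : ℤ) = 1 := by
          rw [← zpow_add₀ hz0]; simp
        calc (ζ ^ (l : ℕ) * z) ^ (-(k : ℤ)) * z ^ (k : ℕ)
            = (ζ ^ (l : ℕ)) ^ (-((k : ℕ) : ℤ)) * (z ^ (-((k : ℕ) : ℤ)) * z ^ ((k : ℕ) : ℤ)) := by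
              rw [mul_zpow, zpow_natCast]; ring
          _ = (ζ ^ (l : ℕ)) ^ (-((k : ℕ) : ℤ)) := by rw [h2, mul_one]
          _ = ((ζ ^ (l : ℕ))⁻¹) ^ (k : ℕ) := by
              rw [zpow_neg, ← inv_zpow, zpow_natCast]
      rw [show (N : ℂ)⁻¹ * ((ζ ^ (l : ℕ) * z) ^ (-(k : ℤ)) * m j (ζ ^ (l : ℕ) * z)) * z ^ (k : ℕ)
          = (N : ℂ)⁻¹ * m j (ζ ^ (l : ℕ) * z) * ((ζ ^ (l : ℕ) * z) ^ (-(k : ℤ)) * z ^ (k : ℕ))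
          from by ring, h1]
    have hiff : ∀ l : Fin N, ((ζ ^ (l : ℕ))⁻¹ = 1) ↔ l = 0 := by
      intro l
      rw [inv_eq_one]
      constructor
      · intro h
        have hd := (hζ.pow_eq_one_iff_dvd (l : ℕ)).mp h
        exact Fin.ext (Nat.eq_zero_of_dvd_of_lt hd l.isLt)
      · rintro rfl; simp
    calc m j z = ∑ l : Fin N, (if l = 0 then m j z else 0) := by simp
      _ = ∑ l : Fin N, ∑ k : Fin N,
            (N : ℂ)⁻¹ * m j (ζ ^ (l : ℕ) * z) * ((ζ ^ (l : ℕ))⁻¹) ^ (k : ℕ) := by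
          refine Finset.sum_congr rfl fun l _ => ?_
          rw [← Finset.mul_sum, sum_pow_root' N _
            (by rw [inv_pow, ← pow_mul, mul_comm, pow_mul, hζN, one_pow, inv_one])]
          by_cases h0 : l = 0
          · rw [if_pos h0, if_pos ((hiff l).mpr h0), h0]
            simp only [Fin.val_zero, pow_zero, one_mul]
            field_simp
          · rw [if_neg h0, if_neg (fun h => h0 ((hiff l).mp h)), mul_zero]
      _ = ∑ k : Fin N, ∑ l : Fin N,
            (N : ℂ)⁻¹ * m j (ζ ^ (l : ℕ) * z) * ((ζ ^ (l : ℕ))⁻¹) ^ (k : ℕ) := Finset.sum_comm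
      _ = ∑ k : Fin N, A j k (z ^ N) * z ^ (k : ℕ) := by
          exact Finset.sum_congr rfl fun k _ => (step k).symm
  refine ⟨parta, ?_⟩
  -- the auxiliary unitary matrix F(z)
  have hFmem : ∀ z : ℂ, ‖z‖ = 1 →
      (Matrix.of fun l k : Fin N => ((Real.sqrt N : ℂ))⁻¹ * (ζ ^ (l : ℕ) * z) ^ (-(k : ℤ)))
        ∈ Matrix.unitaryGroup (Fin N) ℂ := by
    intro z hz
    have hz0 : z ≠ 0 := by intro h; rw [h] at hz; simp at hz
    have hw1 : ∀ l : Fin N, ‖ζ ^ (l : ℕ) * z‖ = 1 := by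
      intro l
      rw [norm_mul, norm_pow, hz, mul_one, hζnorm, one_pow]
    have hwz : ∀ l : Fin N, ζ ^ (l : ℕ) * z ≠ 0 :=
      fun l => mul_ne_zero (pow_ne_zero _ hζ0) hz0
    rw [Matrix.mem_unitaryGroup_iff]
    ext l l'
    rw [Matrix.mul_apply, Matrix.one_apply]
    have step : ∀ k : Fin N,
        (Matrix.of fun l k : Fin N =>
            ((Real.sqrt N : ℂ))⁻¹ * (ζ ^ (l : ℕ) * z) ^ (-(k : ℤ))) l k *
          star (Matrix.of fun l k : Fin N =>
            ((Real.sqrt N : ℂ))⁻¹ * (ζ ^ (l : ℕ) * z) ^ (-(k : ℤ))) k l'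
        = (N : ℂ)⁻¹ * (ζ ^ (l' : ℕ) / ζ ^ (l : ℕ)) ^ (k : ℕ) := by
      intro k
      rw [Matrix.star_apply, Matrix.of_apply, Matrix.of_apply]
      have hc : star (((Real.sqrt N : ℂ))⁻¹ * (ζ ^ (l' : ℕ) * z) ^ (-(k : ℤ)))
          = ((Real.sqrt N : ℂ))⁻¹ * (ζ ^ (l' : ℕ) * z) ^ ((k : ℕ) : ℤ) := by
        rw [star_mul', star_inv₀]
        congr 1
        · rw [Complex.star_def, Complex.conj_ofReal]
        · rw [Complex.star_def, map_zpow₀, ← Complex.inv_eq_conj (hw1 l'),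
            inv_zpow', neg_neg]
      rw [hc]
      have hm1 : (ζ ^ (l : ℕ) * z) ^ (-(k : ℤ)) * (ζ ^ (l' : ℕ) * z) ^ ((k : ℕ) : ℤ)
          = (ζ ^ (l' : ℕ) / ζ ^ (l : ℕ)) ^ (k : ℕ) := by
        rw [zpow_neg, zpow_natCast, zpow_natCast, inv_mul_eq_div, ← div_pow,
          mul_div_mul_right _ _ hz0]
      calc ((Real.sqrt N : ℂ))⁻¹ * (ζ ^ (l : ℕ) * z) ^ (-(k : ℤ)) *
            (((Real.sqrt N : ℂ))⁻¹ * (ζ ^ (l' : ℕ) * z) ^ ((k : ℕ) : ℤ))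
          = ((Real.sqrt N : ℂ))⁻¹ * ((Real.sqrt N : ℂ))⁻¹ *
              ((ζ ^ (l : ℕ) * z) ^ (-(k : ℤ)) * (ζ ^ (l' : ℕ) * z) ^ ((k : ℕ) : ℤ)) := by ring
        _ = (N : ℂ)⁻¹ * (ζ ^ (l' : ℕ) / ζ ^ (l : ℕ)) ^ (k : ℕ) := by rw [hsq, hm1]
    rw [Finset.sum_congr rfl (fun k _ => step k), ← Finset.mul_sum,
      sum_pow_root' N _ (hudiv l l')]
    by_cases h : l = l'
    · rw [if_pos ((hueq l l').mpr h), if_pos h]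
      field_simp
    · rw [if_neg (fun hu => h ((hueq l l').mp hu)), if_neg h, mul_zero]
  -- factorization A(z^N) = M(z) F(z)
  have hMF : ∀ z : ℂ, ‖z‖ = 1 →
      (Matrix.of fun j k : Fin N => A j k (z ^ N))
        = (Matrix.of fun j k : Fin N =>
            ((Real.sqrt N : ℂ))⁻¹ * m j (Complex.exp (2 * π * Complex.I * k / N) * z)) *
          (Matrix.of fun l k : Fin N =>
            ((Real.sqrt N : ℂ))⁻¹ * (ζ ^ (l : ℕ) * z) ^ (-(k : ℤ))) := by
    intro z hz
    ext j k
    rw [Matrix.mul_apply]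
    simp only [Matrix.of_apply]
    rw [keyA j k z hz, Finset.mul_sum]
    refine Finset.sum_congr rfl fun l _ => ?_
    rw [hexp l, ← hsq]
    ring
  constructor
  · intro hM z hz
    have hz0 : z ≠ 0 := by intro h; rw [h] at hz; simp at hz
    set w := Complex.exp (Complex.log z / N) with hw
    have hw1 : ‖w‖ = 1 := by
      rw [hw, Complex.norm_exp]
      have hre : (Complex.log z / N).re = 0 := by
        rw [show ((N : ℂ)) = ((N : ℝ) : ℂ) by norm_num, Complex.div_ofReal_re,
          Complex.log_re, hz, Real.log_one, zero_div]
      rw [hre, Real.exp_zero]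
    have hwN : w ^ N = z := by
      rw [hw, ← Complex.exp_nat_mul,
        show (N : ℂ) * (Complex.log z / N) = Complex.log z from by field_simp,
        Complex.exp_log hz0]
    have heq : (Matrix.of fun j k : Fin N => A j k z)
        = (Matrix.of fun j k : Fin N => A j k (w ^ N)) := by rw [hwN]
    rw [heq, hMF w hw1]
    exact mul_mem (hM w hw1) (hFmem w hw1)
  · intro hA' z hz
    have hNz : ‖z ^ N‖ = 1 := by rw [norm_pow, hz, one_pow]
    have hF := hFmem z hz
    have hMz : (Matrix.of fun j k : Fin N =>
          ((Real.sqrt N : ℂ))⁻¹ * m j (Complex.exp (2 * π * Complex.I * k / N) * z))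
        = (Matrix.of fun j k : Fin N => A j k (z ^ N)) *
          star (Matrix.of fun l k : Fin N =>
            ((Real.sqrt N : ℂ))⁻¹ * (ζ ^ (l : ℕ) * z) ^ (-(k : ℤ))) := by
      rw [hMF z hz, Matrix.mul_assoc, Matrix.mem_unitaryGroup_iff.mp hF, Matrix.mul_one]
    rw [hMz]
    exact mul_mem (hA' (z ^ N) hNz) (Unitary.star_mem hF)
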